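/- Consider ℝ² with coordinates (y₁,y₂) and the quadratic form q(y) = y₁y₂ of signature (1,1). Let U ⊆ ℝ² be open, b₁, b₂ : U → ℝ smooth, and define the curvature coefficients R^l_{ijk} = δ_{il}(b_j b_k − ∂_j b_k) − δ_{jl}(b_i b_k − ∂_i b_k) + δ_{kl}(∂_i b_j − ∂_j b_i). Then the conditions R^1_{122} = 0 and R^2_{121} = 0 hold on U (i.e. the first-order infinitesimal holonomies are infinitesimal similarities of q, so the connection is weakly stiff) if and only if ∂₁ b₁ = b₁² and ∂₂ b₂ = b₂² on U. Moreover, if these equations hold, if U = I × J is a product of open intervals, and if b₁ is nowhere zero on U, then there is a smooth function f₁ : J → ℝ such that f₁(y₂) − y₁ ≠ 0 and b₁(y₁,y₂) = 1/(f₁(y₂) − y₁) on U. -/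

import Mathlib

/-- The partial derivative `∂_j f` in the direction of the `j`-th coordinate. -/
noncomputable def pder {d : ℕ} (f : (Fin d → ℝ) → ℝ) (j : Fin d) (x : Fin d → ℝ) : ℝ :=
  fderiv ℝ f x (Pi.single j 1)

/-- The curvature coefficients `R^l_{ijk}` of the projectively flattened connection
with associated form coefficients `b_1, b_2` (indices `1, 2` are `0, 1` in Lean). -/
noncomputable def curvR {d : ℕ} (b : Fin d → (Fin d → ℝ) → ℝ) (i j k l : Fin d)
    (x : Fin d → ℝ) : ℝ :=
  (if i = l then b j x * b k x - pder (b k) j x else 0)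
    - (if j = l then b i x * b k x - pder (b k) i x else 0)
    + (if k = l then pder (b j) i x - pder (b i) j x else 0)

/-- In null coordinates `(y₁,y₂)` for the signature `(1,1)` form `q(y) = y₁y₂`, weak
stiffness (`R^1_{122} = 0` and `R^2_{121} = 0`) is equivalent to `∂₁b₁ = b₁²` and
`∂₂b₂ = b₂²`; moreover on a product of open intervals where `b₁` never vanishes,
`b₁(y₁,y₂) = 1/(f₁(y₂) − y₁)` for a smooth function `f₁` of `y₂`. -/
theorem stmt13 (U : Set (Fin 2 → ℝ)) (hU : IsOpen U)
    (b : Fin 2 → (Fin 2 → ℝ) → ℝ) (hb : ∀ i, ContDiffOn ℝ (⊤ : ℕ∞) (b i) U) :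
    ((∀ x ∈ U, curvR b 0 1 1 0 x = 0 ∧ curvR b 0 1 0 1 x = 0) ↔
      (∀ x ∈ U, pder (b 0) 0 x = b 0 x ^ 2 ∧ pder (b 1) 1 x = b 1 x ^ 2)) ∧
    ((∀ x ∈ U, pder (b 0) 0 x = b 0 x ^ 2 ∧ pder (b 1) 1 x = b 1 x ^ 2) →
      ∀ I J : Set ℝ, IsOpen I → I.OrdConnected → IsOpen J → J.OrdConnected →
      U = {x : Fin 2 → ℝ | x 0 ∈ I ∧ x 1 ∈ J} →
      (∀ x ∈ U, b 0 x ≠ 0) →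
      ∃ f₁ : ℝ → ℝ, ContDiffOn ℝ (⊤ : ℕ∞) f₁ J ∧
        ∀ x ∈ U, f₁ (x 1) - x 0 ≠ 0 ∧ b 0 x = 1 / (f₁ (x 1) - x 0)) := by
  have key1 : ∀ x, curvR b 0 1 1 0 x = b 1 x * b 1 x - pder (b 1) 1 x := by
    intro x; simp [curvR]
  have key2 : ∀ x, curvR b 0 1 0 1 x = -(b 0 x * b 0 x - pder (b 0) 0 x) := by
    intro x; simp [curvR]
  constructor
  · constructor
    · intro h x hx
      obtain ⟨h1, h2⟩ := h x hx
      rw [key1] at h1; rw [key2] at h2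
      constructor
      · linear_combination h2
      · linear_combination -h1
    · intro h x hx
      obtain ⟨h1, h2⟩ := h x hx
      rw [key1, key2]
      constructor
      · linear_combination -h2
      · linear_combination h1
  · intro hpde I J hI hIc hJ hJc hprod hb0
    rcases Set.eq_empty_or_nonempty I with hIe | ⟨a, ha⟩
    · refine ⟨0, contDiffOn_const, ?_⟩
      intro x hx
      exfalso
      rw [hprod] at hx
      rw [hIe] at hx
      exact hx.1
    -- the auxiliary function h
    set h : (Fin 2 → ℝ) → ℝ := fun x => (b 0 x)⁻¹ + x 0 with hh_def
    -- differentiability of b 0 at points of U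
    have hdiff : ∀ x ∈ U, HasFDerivAt (b 0) (fderiv ℝ (b 0) x) x := by
      intro x hx
      exact (((hb 0).contDiffAt (hU.mem_nhds hx)).differentiableAt (by simp)).hasFDerivAt
    have hhD : ∀ x ∈ U, HasFDerivAt h
        ((-(b 0 x ^ 2)⁻¹) • fderiv ℝ (b 0) x + ContinuousLinearMap.proj (R := ℝ) 0) x := by
      intro x hx
      have hP : HasFDerivAt (fun x : Fin 2 → ℝ => x 0)
          (ContinuousLinearMap.proj (R := ℝ) (φ := fun _ : Fin 2 => ℝ) 0) x :=
        (ContinuousLinearMap.proj (R := ℝ) (φ := fun _ : Fin 2 => ℝ) 0).hasFDerivAt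
      exact ((hasDerivAt_inv (hb0 x hx)).comp_hasFDerivAt x (hdiff x hx)).add hP
    have hval : ∀ x ∈ U,
        (((-(b 0 x ^ 2)⁻¹) • fderiv ℝ (b 0) x + ContinuousLinearMap.proj (R := ℝ) 0 :
            (Fin 2 → ℝ) →L[ℝ] ℝ)) (Pi.single 0 1) = 0 := by
      intro x hx
      have h1 := (hpde x hx).1
      have hb2 : b 0 x ^ 2 ≠ 0 := pow_ne_zero _ (hb0 x hx)
      have : (((-(b 0 x ^ 2)⁻¹) • fderiv ℝ (b 0) x + ContinuousLinearMap.proj (R := ℝ) 0 :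
          (Fin 2 → ℝ) →L[ℝ] ℝ)) (Pi.single 0 1)
          = -(b 0 x ^ 2)⁻¹ * pder (b 0) 0 x + 1 := by
        simp [pder]
      rw [this, h1]
      field_simp
      rw [div_self (hb0 x hx)]; ring
    -- membership lemma
    have hmem : ∀ s t : ℝ, s ∈ I → t ∈ J → (![s, t] : Fin 2 → ℝ) ∈ U := by
      intro s t hs ht
      rw [hprod]
      exact ⟨hs, ht⟩
    -- h is constant in the first variable: for any x ∈ U, h x = h ![a, x 1]
    have hconst : ∀ x ∈ U, h x = h ![a, x 1] := by
      intro x hx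
      have hx' := hx
      rw [hprod] at hx'
      obtain ⟨hx0, hx1⟩ := hx'
      set c : ℝ → (Fin 2 → ℝ) := fun y => ![y, x 1] with hc_def
      have hcU : ∀ y ∈ I, c y ∈ U := fun y hy => hmem y (x 1) hy hx1
      have hcD : ∀ y : ℝ, HasDerivAt c (Pi.single 0 1) y := by
        intro y
        rw [hasDerivAt_pi]
        intro i
        fin_cases i
        · simp [hc_def]; exact hasDerivAt_id y
        · simpa [hc_def] using hasDerivAt_const y (x 1)
      have hgD : ∀ y ∈ I, HasDerivAt (h ∘ c) 0 y := by
        intro y hy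
        have := (hhD (c y) (hcU y hy)).comp_hasDerivAt y (hcD y)
        rwa [hval (c y) (hcU y hy)] at this
      have hdo : DifferentiableOn ℝ (h ∘ c) I := fun y hy =>
        ((hgD y hy).differentiableAt).differentiableWithinAt
      have hfz : ∀ y ∈ I, fderivWithin ℝ (h ∘ c) I y = 0 := by
        intro y hy
        have h0 : HasFDerivAt (h ∘ c) (0 : ℝ →L[ℝ] ℝ) y := by
          have h1 := (hgD y hy).hasFDerivAt
          have h2 : ContinuousLinearMap.toSpanSingleton ℝ (0 : ℝ) = 0 := by
            ext; simp
          rwa [h2] at h1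
        exact h0.hasFDerivWithinAt.fderivWithin (hI.uniqueDiffWithinAt hy)
      have hcx : c (x 0) = x := by
        funext i
        fin_cases i <;> simp [hc_def]
      have := (hIc.convex).is_const_of_fderivWithin_eq_zero hdo hfz hx0 ha
      simpa [hcx] using this
    -- define f₁
    refine ⟨fun t => (b 0 ![a, t])⁻¹ + a, ?_, ?_⟩
    · have hm : ContDiff ℝ (⊤ : ℕ∞) (fun t : ℝ => (![a, t] : Fin 2 → ℝ)) := by
        rw [contDiff_pi]
        intro i
        fin_cases i
        · simpa using contDiff_const
        · simp; exact contDiff_id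
      have hmaps : Set.MapsTo (fun t : ℝ => (![a, t] : Fin 2 → ℝ)) J U :=
        fun t ht => hmem a t ha ht
      have hcomp : ContDiffOn ℝ (⊤ : ℕ∞) (fun t : ℝ => b 0 ![a, t]) J :=
        (hb 0).comp hm.contDiffOn hmaps
      exact (hcomp.inv (fun t ht => hb0 _ (hmem a t ha ht))).add contDiffOn_const
    · intro x hx
      have hkey := hconst x hx
      have h0 : (![a, x 1] : Fin 2 → ℝ) 0 = a := rfl
      have heq : ((fun t => (b 0 ![a, t])⁻¹ + a) (x 1)) = (b 0 x)⁻¹ + x 0 := by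
        simpa [hh_def, h0] using hkey.symm
      rw [heq]
      have hne : (b 0 x)⁻¹ ≠ 0 := inv_ne_zero (hb0 x hx)
      constructor
      · simpa using hne
      · rw [show (b 0 x)⁻¹ + x 0 - x 0 = (b 0 x)⁻¹ by ring]
        rw [one_div, inv_inv]
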